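/- Let b ≥ 0, 0 < m ≤ M, n > 2^b, and for 1 ≤ j ≤ 2^b set p_j = m^{(2^b+1−j)/(2^b+1)} · M^{j/(2^b+1)}. Let σ' be the price sequence of length n with σ'(k) = p_{k+1} for 0 ≤ k ≤ 2^b − 1, σ'(2^b) = M, and σ'(k) = m for 2^b < k ≤ n−1. If a deterministic online search strategy A accepts at some day k ≤ 2^b − 1 when run on σ' (i.e., the least index at which A returns true on the corresponding prefix is at most 2^b − 1), then profit(A, σ') ≤ p_{2^b}, and consequently max_k σ'(k) ≥ (M/m)^{1/(2^b+1)} · profit(A, σ'). -/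

import Mathlib

/-- The maximum price of a price sequence of positive length. -/
noncomputable def maxPrice {n : ℕ} (hn : 0 < n) (σ : Fin n → ℝ) : ℝ :=
  Finset.univ.sup' ⟨⟨0, hn⟩, Finset.mem_univ _⟩ σ

/-- The profit of a deterministic online search strategy `A : List ℝ → Bool`
on the price sequence `σ`: it accepts at the least index `k` such that `A`
applied to the prefix `[σ 0, …, σ k]` is `true`, obtaining `σ k`; if no such
index exists it must accept the last price `σ (n-1)`. -/
noncomputable def osProfit {n : ℕ} (hn : 0 < n) (A : List ℝ → Bool) (σ : Fin n → ℝ) : ℝ :=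
  if h : ∃ k : Fin n, A ((List.ofFn σ).take ((k : ℕ) + 1)) = true then
    σ ((Finset.univ.filter (fun k : Fin n => A ((List.ofFn σ).take ((k : ℕ) + 1)) = true)).min'
      (h.imp fun k hk => Finset.mem_filter.mpr ⟨Finset.mem_univ _, hk⟩))
  else σ ⟨n - 1, Nat.sub_lt hn one_pos⟩

/-- (Second case of the lower-bound proof.) With
`p_j = m^{(2^b+1-j)/(2^b+1)} M^{j/(2^b+1)}` and `σ'` the length-`n` sequence
`p_1, …, p_{2^b}, M, m, …, m`, if a deterministic strategy `A` accepts at some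
day `k ≤ 2^b - 1` when run on `σ'`, then its profit on `σ'` is at most
`p_{2^b}`, and consequently its competitive ratio on `σ'` is at least
`(M/m)^{1/(2^b+1)}`. -/
theorem lower_bound_case_all_accepted
    (b : ℕ) (m M : ℝ) (hm : 0 < m) (hmM : m ≤ M)
    (n : ℕ) (hn : 0 < n) (hbn : 2 ^ b < n)
    (p : ℕ → ℝ)
    (hp : ∀ j : ℕ, 1 ≤ j → j ≤ 2 ^ b →
      p j = m ^ ((2 ^ b + 1 - (j : ℝ)) / (2 ^ b + 1)) * M ^ ((j : ℝ) / (2 ^ b + 1)))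
    (σ : Fin n → ℝ)
    (hσ : ∀ k : Fin n, σ k =
      if (k : ℕ) < 2 ^ b then p ((k : ℕ) + 1) else if (k : ℕ) = 2 ^ b then M else m)
    (A : List ℝ → Bool)
    (hA : ∃ k : Fin n, (k : ℕ) ≤ 2 ^ b - 1 ∧ A ((List.ofFn σ).take ((k : ℕ) + 1)) = true) :
    osProfit hn A σ ≤ p (2 ^ b) ∧
      (M / m) ^ ((1 : ℝ) / (2 ^ b + 1)) * osProfit hn A σ ≤ maxPrice hn σ := by
  have hM : 0 < M := lt_of_lt_of_le hm hmM
  have hc : (0:ℝ) < 2 ^ b + 1 := by positivity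
  obtain ⟨k, hk1, hk2⟩ := hA
  have h : ∃ k : Fin n, A ((List.ofFn σ).take ((k : ℕ) + 1)) = true := ⟨k, hk2⟩
  -- the accepted index
  set S := (Finset.univ.filter (fun k : Fin n => A ((List.ofFn σ).take ((k : ℕ) + 1)) = true))
    with hS
  have hSne : S.Nonempty := ⟨k, Finset.mem_filter.mpr ⟨Finset.mem_univ _, hk2⟩⟩
  have hprofit : osProfit hn A σ = σ (S.min' hSne) := by
    unfold osProfit
    rw [dif_pos h]
  have hk0le : S.min' hSne ≤ k := Finset.min'_le S k (Finset.mem_filter.mpr ⟨Finset.mem_univ _, hk2⟩)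
  have hk0lt : ((S.min' hSne : Fin n) : ℕ) < 2 ^ b := by
    have : ((S.min' hSne : Fin n) : ℕ) ≤ (k : ℕ) := hk0le
    have h2 : (k : ℕ) < 2 ^ b :=
      lt_of_le_of_lt hk1 (Nat.sub_lt (Nat.two_pow_pos b) one_pos)
    omega
  -- profit equals p (k0 + 1)
  have hprofit' : osProfit hn A σ = p (((S.min' hSne : Fin n) : ℕ) + 1) := by
    rw [hprofit, hσ, if_pos hk0lt]
  -- monotonicity: p j ≤ p (2^b) for 1 ≤ j ≤ 2^b
  have hkey : ∀ j : ℕ, 1 ≤ j → j ≤ 2 ^ b → p j ≤ p (2 ^ b) := by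
    intro j hj1 hj2
    rw [hp j hj1 hj2, hp (2 ^ b) (Nat.one_le_two_pow) le_rfl]
    have hjR : (j : ℝ) ≤ 2 ^ b := by
      have := (Nat.cast_le (α := ℝ)).mpr hj2
      push_cast at this ⊢
      linarith
    push_cast
    have e1 : ((2:ℝ) ^ b + 1 - (j : ℝ)) / (2 ^ b + 1)
        = 1 / (2 ^ b + 1) + (2 ^ b - (j : ℝ)) / (2 ^ b + 1) := by ring
    have e2 : ((2:ℝ) ^ b + 1 - 2 ^ b) / (2 ^ b + 1) = 1 / (2 ^ b + 1) := by ring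
    have e3 : ((2:ℝ) ^ b) / (2 ^ b + 1)
        = (2 ^ b - (j : ℝ)) / (2 ^ b + 1) + (j : ℝ) / (2 ^ b + 1) := by ring
    rw [e1, e2, Real.rpow_add hm, e3, Real.rpow_add hM, ← mul_assoc, mul_assoc _ _ (M ^ ((j:ℝ)/(2^b+1))), mul_assoc _ _ (M ^ ((j:ℝ)/(2^b+1)))]
    have hx : (0:ℝ) ≤ (2 ^ b - (j : ℝ)) / (2 ^ b + 1) := by
      apply div_nonneg (by linarith) hc.le
    gcongr
  have h1 : osProfit hn A σ ≤ p (2 ^ b) := by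
    rw [hprofit']
    exact hkey _ (Nat.le_add_left 1 _) (by omega)
  refine ⟨h1, ?_⟩
  -- (M/m)^(1/(2^b+1)) * p(2^b) = M
  have hpN : p (2 ^ b) = m ^ ((1:ℝ) / (2 ^ b + 1)) * M ^ (((2:ℝ) ^ b) / (2 ^ b + 1)) := by
    rw [hp (2 ^ b) Nat.one_le_two_pow le_rfl]
    push_cast
    congr 2
    ring
  have heq : (M / m) ^ ((1 : ℝ) / (2 ^ b + 1)) * p (2 ^ b) = M := by
    have hMM : M ^ ((1:ℝ) / (2 ^ b + 1)) * M ^ (((2:ℝ) ^ b) / (2 ^ b + 1)) = M := by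
      rw [← Real.rpow_add hM]
      rw [show (1:ℝ) / (2 ^ b + 1) + (2:ℝ) ^ b / (2 ^ b + 1) = 1 by
        rw [← add_div, show (1:ℝ) + 2 ^ b = 2 ^ b + 1 by ring]
        exact div_self hc.ne']
      exact Real.rpow_one M
    have hmne : m ^ ((1:ℝ) / (2 ^ b + 1)) ≠ 0 := (Real.rpow_pos_of_pos hm _).ne'
    calc (M / m) ^ ((1:ℝ) / (2 ^ b + 1)) * p (2 ^ b)
        = M ^ ((1:ℝ) / (2 ^ b + 1)) / m ^ ((1:ℝ) / (2 ^ b + 1)) * m ^ ((1:ℝ) / (2 ^ b + 1))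
            * M ^ (((2:ℝ) ^ b) / (2 ^ b + 1)) := by
          rw [hpN, Real.div_rpow hM.le hm.le]; ring
      _ = M ^ ((1:ℝ) / (2 ^ b + 1)) * M ^ (((2:ℝ) ^ b) / (2 ^ b + 1)) := by
          rw [div_mul_cancel₀ _ hmne]
      _ = M := hMM
  have hmax : M ≤ maxPrice hn σ := by
    have hmem : (⟨2 ^ b, hbn⟩ : Fin n) ∈ Finset.univ := Finset.mem_univ _
    have := Finset.le_sup' σ hmem
    rw [hσ ⟨2 ^ b, hbn⟩] at this
    simpa [maxPrice] using this
  calc (M / m) ^ ((1 : ℝ) / (2 ^ b + 1)) * osProfit hn A σ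
      ≤ (M / m) ^ ((1 : ℝ) / (2 ^ b + 1)) * p (2 ^ b) := by
        apply mul_le_mul_of_nonneg_left h1 (Real.rpow_nonneg (by positivity) _)
    _ = M := heq
    _ ≤ maxPrice hn σ := hmax
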